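/- Let r be a positive integer and let m, n be integers with m ≥ 2r + 1 and n ≥ 2r + 1. Then the compound curling number of the r-th power of the tadpole graph T_{m,n} equals 3^(r−1) · (m + n − 2(2r − 1)). -/

import Mathlib

open Finset

/-- The degree of a vertex `v` in a simple graph `G`: the number of its neighbours. -/
noncomputable def gdeg {V : Type*} (G : SimpleGraph V) (v : V) : ℕ :=
  (G.neighborSet v).ncard

/-- The compound curling number of a finite simple graph: the product, over all
values `d` occurring as a vertex degree of `G`, of the number of vertices of degree `d`. -/
noncomputable def compoundCurlingNumber {V : Type*} [Fintype V] (G : SimpleGraph V) : ℕ :=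
  ∏ d ∈ Finset.univ.image (gdeg G), (Finset.univ.filter fun u => gdeg G u = d).card

/-- The `r`-th power of a simple graph `G`: same vertex set, two distinct vertices
adjacent iff their distance in `G` is (finite and) at most `r`. -/
def SimpleGraph.power {V : Type*} (G : SimpleGraph V) (r : ℕ) : SimpleGraph V where
  Adj u v := u ≠ v ∧ G.Reachable u v ∧ G.dist u v ≤ r
  symm := by
    constructor
    rintro u v ⟨h1, h2, h3⟩
    exact ⟨h1.symm, h2.symm, by rwa [SimpleGraph.dist_comm]⟩
  loopless := by
    constructor
    rintro v ⟨h1, -, -⟩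
    exact h1 rfl

/-- The tadpole graph `T_{m,n}`: a cycle on `m` vertices and a path on `n` vertices,
joined by a bridge from vertex `0` of the cycle to the end vertex `0` of the path. -/
def tadpoleGraph (m n : ℕ) : SimpleGraph (Fin m ⊕ Fin n) where
  Adj u v :=
    match u, v with
    | Sum.inl i, Sum.inl j => (SimpleGraph.cycleGraph m).Adj i j
    | Sum.inr i, Sum.inr j => (SimpleGraph.pathGraph n).Adj i j
    | Sum.inl i, Sum.inr j => (i : ℕ) = 0 ∧ (j : ℕ) = 0
    | Sum.inr i, Sum.inl j => (i : ℕ) = 0 ∧ (j : ℕ) = 0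
  symm := by
    constructor
    rintro (i | i) (j | j) h
    · exact h.symm
    · exact ⟨h.2, h.1⟩
    · exact ⟨h.2, h.1⟩
    · exact h.symm
  loopless := by
    constructor
    rintro (i | i) h
    · exact h.ne rfl
    · exact h.ne rfl


/-- cyclic distance between a b < m -/
def cyc (m a b : ℕ) : ℕ := min (max a b - min a b) (m - (max a b - min a b))

/-- explicit tadpole distance -/
def tdist {m n : ℕ} : Fin m ⊕ Fin n → Fin m ⊕ Fin n → ℕ
  | Sum.inl i, Sum.inl j => cyc m i.val j.val
  | Sum.inr i, Sum.inr j => max i.val j.val - min i.val j.val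
  | Sum.inl i, Sum.inr j => cyc m i.val 0 + 1 + j.val
  | Sum.inr i, Sum.inl j => cyc m j.val 0 + 1 + i.val

lemma mod_two_cases {m x : ℕ} (hm : 0 < m) (hx : x < 2 * m) :
    (x % m = x ∧ x < m) ∨ (x % m = x - m ∧ m ≤ x) := by
  rcases lt_or_ge x m with h | h
  · exact Or.inl ⟨Nat.mod_eq_of_lt h, h⟩
  · refine Or.inr ⟨?_, h⟩
    rw [Nat.mod_eq_sub_mod h, Nat.mod_eq_of_lt (by omega)]

lemma fin_sub_val {m : ℕ} (a b : Fin m) : (a - b).val = (m - b.val + a.val) % m := by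
  rw [Fin.sub_def]

lemma tdist_comm {m n : ℕ} (u v : Fin m ⊕ Fin n) : tdist u v = tdist v u := by
  rcases u with i | i <;> rcases v with j | j <;> simp [tdist, cyc] <;> omega

/-- Lipschitz property of tdist along edges -/
lemma tdist_lip {m n : ℕ} (hm : 3 ≤ m) (v a b : Fin m ⊕ Fin n)
    (hab : (tadpoleGraph m n).Adj a b) : tdist v b ≤ tdist v a + 1 := by
  rcases a with a | a <;> rcases b with b | b
  · -- cycle edge
    have h : (SimpleGraph.cycleGraph m).Adj a b := hab
    rw [SimpleGraph.cycleGraph_adj'] at h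
    rw [fin_sub_val, fin_sub_val] at h
    have ha := a.isLt; have hb := b.isLt
    have key : m - b.val + a.val = 1 ∨ m - b.val + a.val = 1 + m ∨
        m - a.val + b.val = 1 ∨ m - a.val + b.val = 1 + m := by
      rcases h with h | h
      · rcases mod_two_cases (x := m - b.val + a.val) (m := m) (by omega) (by omega) with
          ⟨h1, h2⟩ | ⟨h1, h2⟩ <;> rw [h1] at h <;> omega
      · rcases mod_two_cases (x := m - a.val + b.val) (m := m) (by omega) (by omega) with
          ⟨h1, h2⟩ | ⟨h1, h2⟩ <;> rw [h1] at h <;> omega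
    clear h hab
    rcases v with x | x <;>
    · have hx := x.isLt
      simp only [tdist, cyc]
      omega
  · -- bridge inl -> inr
    obtain ⟨h1, h2⟩ : (a : ℕ) = 0 ∧ (b : ℕ) = 0 := hab
    rcases v with x | x <;>
    · have hx := x.isLt; simp only [tdist, cyc]; omega
  · -- bridge inr -> inl
    obtain ⟨h1, h2⟩ : (a : ℕ) = 0 ∧ (b : ℕ) = 0 := hab
    rcases v with x | x <;>
    · have hx := x.isLt; simp only [tdist, cyc]; omega
  · -- path edge
    have h : (SimpleGraph.pathGraph n).Adj a b := hab
    rw [SimpleGraph.pathGraph_adj] at h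
    rcases v with x | x <;>
    · have hx := x.isLt; simp only [tdist, cyc]; omega
section Walks
open SimpleGraph
open Fin.NatCast Fin.CommRing
variable {m n : ℕ}

lemma cyc_self (m a : ℕ) : cyc m a a = 0 := by simp [cyc]

lemma tdist_self (u : Fin m ⊕ Fin n) : tdist u u = 0 := by
  rcases u with i | i <;> simp [tdist, cyc]

lemma walk_cycle_step [NeZero m] (hm : 3 ≤ m) (i : Fin m) (k : ℕ) :
    ∃ w : (tadpoleGraph m n).Walk (Sum.inl i) (Sum.inl (i + (k : Fin m))), w.length = k := by
  induction k with
  | zero =>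
    exact ⟨Walk.nil.copy rfl (by simp), by simp⟩
  | succ k ih =>
    obtain ⟨w, hw⟩ := ih
    have hadj : (tadpoleGraph m n).Adj (Sum.inl (i + (k : Fin m)))
        (Sum.inl (i + ((k+1 : ℕ) : Fin m))) := by
      show (cycleGraph m).Adj _ _
      rw [cycleGraph_adj']
      right
      have h1 : i + ((k+1 : ℕ) : Fin m) - (i + (k : Fin m)) = ((1:ℕ) : Fin m) := by
        push_cast
        ring
      rw [h1, Fin.val_cast_of_lt (show (1:ℕ) < m by omega)]
    exact ⟨w.concat hadj, by simp [hw]⟩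

lemma walk_path_step (j : Fin n) (k : ℕ) (h : j.val + k < n) :
    ∃ w : (tadpoleGraph m n).Walk (Sum.inr j) (Sum.inr ⟨j.val + k, h⟩), w.length = k := by
  induction k with
  | zero =>
    exact ⟨Walk.nil.copy rfl (congrArg Sum.inr (Fin.ext (by simp))), by simp⟩
  | succ k ih =>
    obtain ⟨w, hw⟩ := ih (by omega)
    have hadj : (tadpoleGraph m n).Adj (Sum.inr ⟨j.val + k, by omega⟩)
        (Sum.inr ⟨j.val + (k+1), h⟩) := by
      show (pathGraph n).Adj _ _
      rw [pathGraph_adj]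
      left
      show j.val + k + 1 = j.val + (k + 1)
      omega
    exact ⟨w.concat hadj, by simp [hw]⟩

lemma cyc_eq_min (hm : 3 ≤ m) (i j : Fin m) :
    min ((j - i).val) ((i - j).val) = cyc m i.val j.val := by
  have hi := i.isLt; have hj := j.isLt
  rw [fin_sub_val, fin_sub_val]
  rcases mod_two_cases (x := m - i.val + j.val) (m := m) (by omega) (by omega) with
    ⟨h1, h2⟩ | ⟨h1, h2⟩ <;>
  rcases mod_two_cases (x := m - j.val + i.val) (m := m) (by omega) (by omega) with
    ⟨h3, h4⟩ | ⟨h3, h4⟩ <;>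
  rw [h1, h3] <;> simp only [cyc] <;> omega

lemma dist_cc (hm : 3 ≤ m) (i j : Fin m) :
    (tadpoleGraph m n).dist (Sum.inl i) (Sum.inl j) ≤ cyc m i.val j.val := by
  haveI : NeZero m := ⟨by omega⟩
  obtain ⟨w1, hw1⟩ := walk_cycle_step (n := n) hm i ((j - i).val)
  obtain ⟨w2, hw2⟩ := walk_cycle_step (n := n) hm j ((i - j).val)
  have e1 : i + (((j - i).val : ℕ) : Fin m) = j := by
    rw [Fin.cast_val_eq_self, add_comm, sub_add_cancel]
  have e2 : j + (((i - j).val : ℕ) : Fin m) = i := by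
    rw [Fin.cast_val_eq_self, add_comm, sub_add_cancel]
  have d1 := SimpleGraph.dist_le (w1.copy rfl (by rw [e1]))
  have d2 := SimpleGraph.dist_le ((w2.copy rfl (by rw [e2])).reverse)
  rw [SimpleGraph.Walk.length_copy, hw1] at d1
  rw [SimpleGraph.Walk.length_reverse, SimpleGraph.Walk.length_copy, hw2] at d2
  have hcomm := SimpleGraph.dist_comm (G := tadpoleGraph m n)
    (u := Sum.inl j) (v := Sum.inl i)
  rw [← cyc_eq_min hm i j]
  omega

lemma dist_pp (a b : Fin n) :
    (tadpoleGraph m n).dist (Sum.inr a) (Sum.inr b) ≤ max a.val b.val - min a.val b.val := by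
  rcases le_total a.val b.val with h | h
  · obtain ⟨w, hw⟩ := walk_path_step (m := m) a (b.val - a.val) (by omega)
    have e : Sum.inr (⟨a.val + (b.val - a.val), by omega⟩ : Fin n) = (Sum.inr b : Fin m ⊕ Fin n) :=
      congrArg Sum.inr (Fin.ext (by show a.val + (b.val - a.val) = b.val; omega))
    have hd := SimpleGraph.dist_le (w.copy rfl e)
    rw [SimpleGraph.Walk.length_copy, hw] at hd
    omega
  · obtain ⟨w, hw⟩ := walk_path_step (m := m) b (a.val - b.val) (by omega)
    have e : Sum.inr (⟨b.val + (a.val - b.val), by omega⟩ : Fin n) = (Sum.inr a : Fin m ⊕ Fin n) :=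
      congrArg Sum.inr (Fin.ext (by show b.val + (a.val - b.val) = a.val; omega))
    have hd := SimpleGraph.dist_le ((w.copy rfl e).reverse)
    rw [SimpleGraph.Walk.length_reverse, SimpleGraph.Walk.length_copy, hw] at hd
    have hcomm := SimpleGraph.dist_comm (G := tadpoleGraph m n)
      (u := Sum.inr a) (v := Sum.inr b)
    omega

lemma adj_bridge (hm : 3 ≤ m) (hn : 1 ≤ n) :
    (tadpoleGraph m n).Adj (Sum.inl (⟨0, by omega⟩ : Fin m)) (Sum.inr (⟨0, by omega⟩ : Fin n)) :=
  ⟨rfl, rfl⟩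

lemma reach_all (hm : 3 ≤ m) (hn : 1 ≤ n) (u v : Fin m ⊕ Fin n) :
    (tadpoleGraph m n).Reachable u v := by
  haveI : NeZero m := ⟨by omega⟩
  have hc : ∀ i : Fin m, (tadpoleGraph m n).Reachable (Sum.inl ⟨0, by omega⟩) (Sum.inl i) := by
    intro i
    obtain ⟨w, -⟩ := walk_cycle_step (n := n) hm ⟨0, by omega⟩ i.val
    have e : Sum.inl ((⟨0, by omega⟩ : Fin m) + (i.val : Fin m)) = (Sum.inl i : Fin m ⊕ Fin n) := by
      rw [Fin.cast_val_eq_self]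
      exact congrArg Sum.inl (Fin.ext (by show (0 + i.val) % m = i.val; simp [Nat.mod_eq_of_lt i.isLt]))
    exact ⟨w.copy rfl e⟩
  have hp : ∀ j : Fin n, (tadpoleGraph m n).Reachable (Sum.inr ⟨0, by omega⟩) (Sum.inr j) := by
    intro j
    have hlt : (⟨0, by omega⟩ : Fin n).val + j.val < n := by
      show 0 + j.val < n; have := j.isLt; omega
    obtain ⟨w, -⟩ := walk_path_step (m := m) ⟨0, by omega⟩ j.val hlt
    have e : Sum.inr (⟨(⟨0, by omega⟩ : Fin n).val + j.val, hlt⟩ : Fin n)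
        = (Sum.inr j : Fin m ⊕ Fin n) :=
      congrArg Sum.inr (Fin.ext (by show 0 + j.val = j.val; omega))
    exact ⟨w.copy rfl e⟩
  have hb : (tadpoleGraph m n).Reachable (Sum.inl (⟨0, by omega⟩ : Fin m))
      (Sum.inr (⟨0, by omega⟩ : Fin n)) := (adj_bridge hm hn).reachable
  have key : ∀ u, (tadpoleGraph m n).Reachable (Sum.inl ⟨0, by omega⟩) u := by
    rintro (i | j)
    · exact hc i
    · exact hb.trans (hp j)
  exact (key u).symm.trans (key v)

lemma tadpole_connected (hm : 3 ≤ m) (hn : 1 ≤ n) : (tadpoleGraph m n).Connected := by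
  rw [SimpleGraph.connected_iff]
  exact ⟨reach_all hm hn, ⟨Sum.inl ⟨0, by omega⟩⟩⟩

lemma dist_cp (hm : 3 ≤ m) (hn : 1 ≤ n) (i : Fin m) (j : Fin n) :
    (tadpoleGraph m n).dist (Sum.inl i) (Sum.inr j) ≤ cyc m i.val 0 + 1 + j.val := by
  have hconn := tadpole_connected (n := n) hm hn
  have t1 := hconn.dist_triangle (u := Sum.inl i) (v := Sum.inl ⟨0, by omega⟩)
    (w := Sum.inr j)
  have t2 := hconn.dist_triangle (u := Sum.inl (⟨0, by omega⟩ : Fin m))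
    (v := Sum.inr (⟨0, by omega⟩ : Fin n)) (w := Sum.inr j)
  have d1 : (tadpoleGraph m n).dist (Sum.inl i) (Sum.inl ⟨0, by omega⟩) ≤ cyc m i.val 0 :=
    dist_cc hm i ⟨0, by omega⟩
  have d2 : (tadpoleGraph m n).dist (Sum.inl (⟨0, by omega⟩ : Fin m))
      (Sum.inr (⟨0, by omega⟩ : Fin n)) ≤ 1 :=
    SimpleGraph.dist_le ((adj_bridge hm hn).toWalk)
  have d3 := dist_pp (m := m) (⟨0, by omega⟩ : Fin n) j
  have hv : (⟨0, by omega⟩ : Fin n).val = 0 := rfl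
  rw [hv] at d3
  omega

lemma tdist_le_walk (hm : 3 ≤ m) {u v : Fin m ⊕ Fin n}
    (w : (tadpoleGraph m n).Walk u v) : tdist u v ≤ w.length := by
  induction w with
  | nil => simp [tdist_self]
  | @cons a b c h p ih =>
    have hlip := tdist_lip hm c b a h.symm
    have e1 := tdist_comm a c
    have e2 := tdist_comm b c
    rw [SimpleGraph.Walk.length_cons]
    omega

lemma dist_eq_tdist (hm : 3 ≤ m) (hn : 1 ≤ n) (u v : Fin m ⊕ Fin n) :
    (tadpoleGraph m n).dist u v = tdist u v := by
  apply le_antisymm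
  · rcases u with i | i <;> rcases v with j | j
    · exact le_trans (dist_cc hm i j) (by simp [tdist])
    · exact le_trans (dist_cp hm hn i j) (by simp [tdist])
    · rw [SimpleGraph.dist_comm, tdist_comm]
      exact le_trans (dist_cp hm hn j i) (by simp [tdist])
    · exact le_trans (dist_pp i j) (by simp [tdist])
  · obtain ⟨w, hw⟩ := (reach_all hm hn u v).exists_walk_length_eq_dist
    rw [← hw]
    exact tdist_le_walk hm w

end Walks
section Degrees
open SimpleGraph
variable {r m n : ℕ}

def degL (r m i : ℕ) : ℕ := 2*r + (r - min i (m - i))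
def degR (r n j : ℕ) : ℕ := min j r + min (n-1-j) r + ((r - j) + (r - (j+1)))

lemma cyc_zero (m i : ℕ) : cyc m i 0 = min i (m - i) := by
  simp [cyc]

lemma neighborSet_power_eq (hm : 3 ≤ m) (hn : 1 ≤ n) (v : Fin m ⊕ Fin n) :
    ((tadpoleGraph m n).power r).neighborSet v
      = ↑(Finset.univ.filter fun u => v ≠ u ∧ tdist v u ≤ r) := by
  ext u
  simp only [mem_neighborSet, Finset.coe_filter, Set.mem_setOf_eq, Finset.mem_univ, true_and]
  constructor
  · rintro ⟨h1, -, h3⟩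
    rw [dist_eq_tdist hm hn] at h3
    exact ⟨h1, h3⟩
  · rintro ⟨h1, h2⟩
    exact ⟨h1, reach_all hm hn v u, by rw [dist_eq_tdist hm hn]; exact h2⟩

lemma gdeg_eq_card (hm : 3 ≤ m) (hn : 1 ≤ n) (v : Fin m ⊕ Fin n) :
    gdeg ((tadpoleGraph m n).power r) v
      = (Finset.univ.filter fun u => v ≠ u ∧ tdist v u ≤ r).card := by
  rw [gdeg, neighborSet_power_eq hm hn, Set.ncard_coe_finset]

lemma card_filter_sum (p : Fin m ⊕ Fin n → Prop) [DecidablePred p]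
    (pl pr : ℕ → Prop) [DecidablePred pl] [DecidablePred pr]
    (hl : ∀ a : Fin m, p (Sum.inl a) ↔ pl a.val) (hr : ∀ b : Fin n, p (Sum.inr b) ↔ pr b.val) :
    (Finset.univ.filter p).card
      = ((Finset.range m).filter pl).card + ((Finset.range n).filter pr).card := by
  rw [Finset.card_filter, Fintype.sum_sum_type, Finset.card_filter, Finset.card_filter,
      ← Fin.sum_univ_eq_sum_range (fun x => if pl x then 1 else 0) m,
      ← Fin.sum_univ_eq_sum_range (fun x => if pr x then 1 else 0) n]
  congr 1
  · exact Finset.sum_congr rfl fun a _ => if_congr (hl a) rfl rfl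
  · exact Finset.sum_congr rfl fun b _ => if_congr (hr b) rfl rfl

-- counting lemmas over range
lemma count_cyc_nbrs (hr : 1 ≤ r) (hm : 2*r+1 ≤ m) {i : ℕ} (hi : i < m) :
    ((Finset.range m).filter fun x => ¬ i = x ∧ cyc m i x ≤ r).card = 2*r := by
  have e : (Finset.range m).filter (fun x => ¬ i = x ∧ cyc m i x ≤ r)
      = ((Finset.Icc (i - r) (min (i + r) (m-1))) \ {i})
        ∪ (Finset.Ico 0 (i + r + 1 - m) ∪ Finset.Icc (m + i - r) (m-1)) := by
    ext x
    rw [Finset.mem_filter]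
    simp only [Finset.mem_filter, Finset.mem_range, Finset.mem_union, Finset.mem_sdiff,
      Finset.mem_Icc, Finset.mem_Ico, Finset.mem_singleton, cyc]
    omega
  rw [e]
  rw [Finset.card_union_of_disjoint (by
    simp only [Finset.disjoint_left, Finset.mem_sdiff, Finset.mem_Icc, Finset.mem_union,
      Finset.mem_Ico, Finset.mem_singleton]
    intro x hx hx2
    rcases hx2 with h | h <;> rcases hx with ⟨⟨h1, h2⟩, h3⟩ <;> omega)]
  rw [Finset.card_union_of_disjoint (by
    simp only [Finset.disjoint_left, Finset.mem_Icc, Finset.mem_Ico]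
    intro x hx hx2
    omega)]
  rw [Finset.card_sdiff_of_subset (by
    simp only [Finset.singleton_subset_iff, Finset.mem_Icc]
    omega)]
  simp only [Nat.card_Icc, Nat.card_Ico, Finset.card_singleton]
  omega

lemma count_path_from_cyc (hrn : r ≤ n) (c : ℕ) :
    ((Finset.range n).filter fun y => c + 1 + y ≤ r).card = r - c := by
  have e : (Finset.range n).filter (fun y => c + 1 + y ≤ r) = Finset.range (r - c) := by
    ext y
    simp only [Finset.mem_filter, Finset.mem_range]
    omega
  rw [e, Finset.card_range]

lemma count_cyc_from_path (hr : 1 ≤ r) (hm : 2*r+1 ≤ m) (j : ℕ) :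
    ((Finset.range m).filter fun x => cyc m x 0 + 1 + j ≤ r).card = (r - j) + (r - (j+1)) := by
  have e : (Finset.range m).filter (fun x => cyc m x 0 + 1 + j ≤ r)
      = Finset.Ico 0 (r - j) ∪ Finset.Icc (m + (j + 1) - r) (m - 1) := by
    ext x
    rw [Finset.mem_filter]
    simp only [Finset.mem_filter, Finset.mem_range, Finset.mem_union, Finset.mem_Ico,
      Finset.mem_Icc, cyc]
    omega
  rw [e, Finset.card_union_of_disjoint (by
    simp only [Finset.disjoint_left, Finset.mem_Ico, Finset.mem_Icc]
    intro x hx hx2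
    omega)]
  simp only [Nat.card_Icc, Nat.card_Ico]
  omega

lemma count_path_nbrs (hrn : 2*r+1 ≤ n) {j : ℕ} (hj : j < n) :
    ((Finset.range n).filter fun y => ¬ j = y ∧ max j y - min j y ≤ r).card
      = min j r + min (n-1-j) r := by
  have e : (Finset.range n).filter (fun y => ¬ j = y ∧ max j y - min j y ≤ r)
      = Finset.Icc (j - r) (min (j + r) (n-1)) \ {j} := by
    ext y
    simp only [Finset.mem_filter, Finset.mem_range, Finset.mem_sdiff, Finset.mem_Icc,
      Finset.mem_singleton]
    omega
  rw [e, Finset.card_sdiff_of_subset (by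
    simp only [Finset.singleton_subset_iff, Finset.mem_Icc]
    omega)]
  simp only [Nat.card_Icc, Finset.card_singleton]
  omega

lemma gdeg_inl (hr : 1 ≤ r) (hm : 2*r+1 ≤ m) (hn : 2*r+1 ≤ n) (i : Fin m) :
    gdeg ((tadpoleGraph m n).power r) (Sum.inl i) = degL r m i.val := by
  rw [gdeg_eq_card (by omega) (by omega)]
  rw [card_filter_sum _ (fun x => ¬ i.val = x ∧ cyc m i.val x ≤ r)
      (fun y => cyc m i.val 0 + 1 + y ≤ r)
      (fun a => by simp [tdist, Fin.ext_iff])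
      (fun b => by simp [tdist])]
  rw [count_cyc_nbrs hr hm i.isLt, count_path_from_cyc (by omega)]
  rw [cyc_zero]
  rfl

lemma gdeg_inr (hr : 1 ≤ r) (hm : 2*r+1 ≤ m) (hn : 2*r+1 ≤ n) (j : Fin n) :
    gdeg ((tadpoleGraph m n).power r) (Sum.inr j) = degR r n j.val := by
  rw [gdeg_eq_card (by omega) (by omega)]
  rw [card_filter_sum _ (fun x => cyc m x 0 + 1 + j.val ≤ r)
      (fun y => ¬ j.val = y ∧ max j.val y - min j.val y ≤ r)
      (fun a => by simp [tdist])
      (fun b => by simp [tdist, Fin.ext_iff])]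
  rw [count_cyc_from_path hr hm, count_path_nbrs hn j.isLt]
  rw [degR]
  omega

end Degrees
section Assembly
open SimpleGraph
variable {r m n : ℕ}

lemma degL_count (hr : 1 ≤ r) (hm : 2*r+1 ≤ m) (d : ℕ) :
    ((Finset.range m).filter fun i => degL r m i = d).card =
      if d = 2*r then m - (2*r - 1)
      else if 2*r+1 ≤ d ∧ d ≤ 3*r - 1 then 2
      else if d = 3*r then 1 else 0 := by
  by_cases h1 : d = 2*r
  · subst h1
    rw [if_pos rfl]
    have e : (Finset.range m).filter (fun i => degL r m i = 2*r) = Finset.Icc r (m - r) := by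
      ext i
      rw [Finset.mem_filter]
      simp only [Finset.mem_filter, Finset.mem_range, Finset.mem_Icc, degL]
      omega
    rw [e, Nat.card_Icc]
    omega
  · rw [if_neg h1]
    by_cases h2 : 2*r+1 ≤ d ∧ d ≤ 3*r - 1
    · rw [if_pos h2]
      have e : (Finset.range m).filter (fun i => degL r m i = d) = {3*r - d, m - (3*r - d)} := by
        ext i
        rw [Finset.mem_filter]
        simp only [Finset.mem_filter, Finset.mem_range, Finset.mem_insert,
          Finset.mem_singleton, degL]
        omega
      rw [e, Finset.card_pair (by omega)]
    · rw [if_neg h2]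
      by_cases h3 : d = 3*r
      · subst h3
        rw [if_pos rfl]
        have e : (Finset.range m).filter (fun i => degL r m i = 3*r) = {0} := by
          ext i
          rw [Finset.mem_filter]
          simp only [Finset.mem_filter, Finset.mem_range, Finset.mem_singleton, degL]
          omega
        rw [e, Finset.card_singleton]
      · rw [if_neg h3]
        have e : (Finset.range m).filter (fun i => degL r m i = d) = ∅ := by
          ext i
          rw [Finset.mem_filter]
          simp only [Finset.mem_filter, Finset.mem_range, Finset.notMem_empty,
            iff_false, not_and, degL]
          intro hi
          omega
        rw [e, Finset.card_empty]

lemma degR_count (hr : 1 ≤ r) (hn : 2*r+1 ≤ n) (d : ℕ) :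
    ((Finset.range n).filter fun j => degR r n j = d).card =
      if d = 2*r then n - (2*r - 1)
      else if r ≤ d ∧ d ≤ 3*r - 1 then 1 else 0 := by
  by_cases h1 : d = 2*r
  · subst h1
    rw [if_pos rfl]
    have e : (Finset.range n).filter (fun j => degR r n j = 2*r)
        = Finset.Icc (r - 1) (n - 1 - r) := by
      ext j
      rw [Finset.mem_filter]
      simp only [Finset.mem_filter, Finset.mem_range, Finset.mem_Icc, degR]
      omega
    rw [e, Nat.card_Icc]
    omega
  · rw [if_neg h1]
    by_cases h2 : r ≤ d ∧ d ≤ 3*r - 1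
    · rw [if_pos h2]
      rcases lt_or_gt_of_ne (show d ≠ 2*r from h1) with h3 | h3
      · have e : (Finset.range n).filter (fun j => degR r n j = d) = {n - 1 - (d - r)} := by
          ext j
          rw [Finset.mem_filter]
          simp only [Finset.mem_filter, Finset.mem_range, Finset.mem_singleton, degR]
          omega
        rw [e, Finset.card_singleton]
      · have e : (Finset.range n).filter (fun j => degR r n j = d) = {3*r - 1 - d} := by
          ext j
          rw [Finset.mem_filter]
          simp only [Finset.mem_filter, Finset.mem_range, Finset.mem_singleton, degR]
          omega
        rw [e, Finset.card_singleton]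
    · rw [if_neg h2]
      have e : (Finset.range n).filter (fun j => degR r n j = d) = ∅ := by
        ext j
        rw [Finset.mem_filter]
        simp only [Finset.mem_filter, Finset.mem_range, Finset.notMem_empty,
          iff_false, not_and, degR]
        intro hj
        omega
      rw [e, Finset.card_empty]

lemma image_gdeg (hr : 1 ≤ r) (hm : 2*r+1 ≤ m) (hn : 2*r+1 ≤ n) :
    Finset.univ.image (gdeg ((tadpoleGraph m n).power r)) = Finset.Icc r (3*r) := by
  ext d
  simp only [Finset.mem_image, Finset.mem_univ, true_and, Finset.mem_Icc]
  constructor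
  · rintro ⟨v, rfl⟩
    rcases v with i | j
    · rw [gdeg_inl hr hm hn i]
      have := i.isLt
      simp only [degL]
      omega
    · rw [gdeg_inr hr hm hn j]
      have := j.isLt
      simp only [degR]
      omega
  · rintro ⟨h1, h2⟩
    rcases le_or_gt (2*r) d with h3 | h3
    · refine ⟨Sum.inl ⟨3*r - d, by omega⟩, ?_⟩
      rw [gdeg_inl hr hm hn]
      simp only [degL]
      omega
    · refine ⟨Sum.inr ⟨n - 1 - (d - r), by omega⟩, ?_⟩
      rw [gdeg_inr hr hm hn]
      simp only [degR]
      omega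

lemma count_gdeg (hr : 1 ≤ r) (hm : 2*r+1 ≤ m) (hn : 2*r+1 ≤ n) (d : ℕ) :
    (Finset.univ.filter fun u => gdeg ((tadpoleGraph m n).power r) u = d).card
      = ((Finset.range m).filter fun i => degL r m i = d).card
        + ((Finset.range n).filter fun j => degR r n j = d).card := by
  exact card_filter_sum _ (fun i => degL r m i = d) (fun j => degR r n j = d)
    (fun a => by rw [gdeg_inl hr hm hn]) (fun b => by rw [gdeg_inr hr hm hn])

theorem compoundCurlingNumber_tadpoleGraph_power' (r m n : ℕ) (hr : 1 ≤ r)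
    (hm : 2 * r + 1 ≤ m) (hn : 2 * r + 1 ≤ n) :
    compoundCurlingNumber ((tadpoleGraph m n).power r) =
      3 ^ (r - 1) * (m + n - 2 * (2 * r - 1)) := by
  rw [compoundCurlingNumber, image_gdeg hr hm hn]
  rw [Finset.prod_congr rfl (fun d _ => by
    rw [count_gdeg hr hm hn d, degL_count hr hm d, degR_count hr hn d])]
  have hsplit : Finset.Icc r (3*r)
      = (Finset.Icc r (2*r-1) ∪ {2*r}) ∪ (Finset.Icc (2*r+1) (3*r-1) ∪ {3*r}) := by
    ext x
    simp only [Finset.mem_Icc, Finset.mem_union, Finset.mem_singleton]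
    omega
  rw [hsplit]
  rw [Finset.prod_union (by
    simp only [Finset.disjoint_left, Finset.mem_union, Finset.mem_Icc, Finset.mem_singleton]
    intro x hx hx2
    rcases hx with h | h <;> rcases hx2 with h' | h' <;> omega)]
  rw [Finset.prod_union (by
    simp only [Finset.disjoint_left, Finset.mem_Icc, Finset.mem_singleton]
    intro x hx hx2
    omega)]
  rw [Finset.prod_union (by
    simp only [Finset.disjoint_left, Finset.mem_Icc, Finset.mem_singleton]
    intro x hx hx2
    omega)]
  rw [Finset.prod_singleton, Finset.prod_singleton]
  have p1 : ∏ d ∈ Finset.Icc r (2*r-1),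
      ((if d = 2*r then m - (2*r - 1) else if 2*r+1 ≤ d ∧ d ≤ 3*r - 1 then 2
        else if d = 3*r then 1 else 0)
        + (if d = 2*r then n - (2*r - 1) else if r ≤ d ∧ d ≤ 3*r - 1 then 1 else 0)) = 1 := by
    apply Finset.prod_eq_one
    intro d hd
    rw [Finset.mem_Icc] at hd
    split_ifs <;> omega
  have p3 : ∏ d ∈ Finset.Icc (2*r+1) (3*r-1),
      ((if d = 2*r then m - (2*r - 1) else if 2*r+1 ≤ d ∧ d ≤ 3*r - 1 then 2
        else if d = 3*r then 1 else 0)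
        + (if d = 2*r then n - (2*r - 1) else if r ≤ d ∧ d ≤ 3*r - 1 then 1 else 0))
      = 3 ^ (r - 1) := by
    have hconst : ∀ d ∈ Finset.Icc (2*r+1) (3*r-1),
        ((if d = 2*r then m - (2*r - 1) else if 2*r+1 ≤ d ∧ d ≤ 3*r - 1 then 2
          else if d = 3*r then 1 else 0)
          + (if d = 2*r then n - (2*r - 1) else if r ≤ d ∧ d ≤ 3*r - 1 then 1 else 0))
          = 3 := by
      intro d hd
      rw [Finset.mem_Icc] at hd
      split_ifs <;> omega
    rw [Finset.prod_congr rfl hconst, Finset.prod_const, Nat.card_Icc]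
    congr 1
    omega
  rw [p1, p3]
  have e2 : ((if 2*r = 2*r then m - (2*r - 1) else if 2*r+1 ≤ 2*r ∧ 2*r ≤ 3*r - 1 then 2
        else if 2*r = 3*r then 1 else 0)
        + (if 2*r = 2*r then n - (2*r - 1) else if r ≤ 2*r ∧ 2*r ≤ 3*r - 1 then 1 else 0))
      = (m - (2*r-1)) + (n - (2*r-1)) := by
    split_ifs <;> omega
  have e4 : ((if 3*r = 2*r then m - (2*r - 1) else if 2*r+1 ≤ 3*r ∧ 3*r ≤ 3*r - 1 then 2
        else if 3*r = 3*r then 1 else 0)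
        + (if 3*r = 2*r then n - (2*r - 1) else if r ≤ 3*r ∧ 3*r ≤ 3*r - 1 then 1 else 0))
      = 1 := by
    split_ifs <;> omega
  rw [e2, e4]
  rw [one_mul, mul_one]
  rw [mul_comm]
  congr 1
  omega

end Assembly

/-- For `r ≥ 1` and `m, n ≥ 2r + 1`, the compound curling number of the
`r`-th power of the tadpole graph `T_{m,n}` is `3 ^ (r - 1) * (m + n - 2(2r - 1))`. -/
theorem compoundCurlingNumber_tadpoleGraph_power (r m n : ℕ) (hr : 1 ≤ r)
    (hm : 2 * r + 1 ≤ m) (hn : 2 * r + 1 ≤ n) :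
    compoundCurlingNumber ((tadpoleGraph m n).power r) =
      3 ^ (r - 1) * (m + n - 2 * (2 * r - 1)) := by
  exact compoundCurlingNumber_tadpoleGraph_power' r m n hr hm hn
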